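/- Kruskal's theorem for unlabelled trees (KT(ω)): the set T of finite rooted ordered unlabelled trees (equivalently, T(Q) for Q a one-element quasi-order), quasi-ordered by the embeddability relation ⪯, is a well quasi-order. -/

import Mathlib

/-- Finite rooted ordered trees (rose trees) with labels in `Q`. -/
inductive RoseTree (Q : Type) : Type
  | node : Q → List (RoseTree Q) → RoseTree Q

/-- The embeddability relation `⪯` on labelled trees. -/
inductive TreeEmb {Q : Type} (le : Q → Q → Prop) : RoseTree Q → RoseTree Q → Prop
  | subtree {t : RoseTree Q} {q : Q} {ss : List (RoseTree Q)} {s : RoseTree Q} :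
      s ∈ ss → TreeEmb le t s → TreeEmb le t (RoseTree.node q ss)
  | node {p q : Q} {ts ss : List (RoseTree Q)} :
      le p q → List.SublistForall₂ (TreeEmb le) ts ss →
      TreeEmb le (RoseTree.node p ts) (RoseTree.node q ss)

namespace KruskalAux

abbrev T := RoseTree Unit
abbrev r : T → T → Prop := TreeEmb (fun _ _ => True)

/-- size of a rose tree -/
def tsize : T → ℕ
  | .node _ ts => (ts.attach.map (fun x => tsize x.1)).sum + 1
decreasing_by
  have := List.sizeOf_lt_of_mem x.2
  simp only [RoseTree.node.sizeOf_spec]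
  omega

lemma tsize_lt {t : T} {q : Unit} {ts : List T} (h : t ∈ ts) :
    tsize t < tsize (RoseTree.node q ts) := by
  have heq : tsize (RoseTree.node q ts) = (ts.attach.map (fun x => tsize x.1)).sum + 1 := by
    simp [tsize]
  have : tsize t ≤ (ts.attach.map (fun x => tsize x.1)).sum := by
    apply List.single_le_sum (fun _ _ => Nat.zero_le _)
    exact List.mem_map.2 ⟨⟨t, h⟩, List.mem_attach _ _, rfl⟩
  omega

lemma tsize_pos (t : T) : 0 < tsize t := by
  cases t with
  | node q ts =>
    have heq : tsize (RoseTree.node q ts) = (ts.attach.map (fun x => tsize x.1)).sum + 1 := by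
      simp [tsize]
    omega

lemma sf_nil_right {R : T → T → Prop} {l : List T} (h : List.SublistForall₂ R l []) :
    l = [] := by cases h; rfl

lemma sf_mem {R : T → T → Prop} :
    ∀ {l₁ l₂ : List T}, List.SublistForall₂ R l₁ l₂ → ∀ a ∈ l₁, ∃ b ∈ l₂, R a b := by
  intro l₁ l₂ h
  induction h with
  | nil => intro a ha; cases ha
  | cons hab _ ih =>
    intro a ha
    rcases List.mem_cons.1 ha with rfl | ha
    · exact ⟨_, List.mem_cons_self, hab⟩
    · obtain ⟨b, hb, hr⟩ := ih a ha
      exact ⟨b, List.mem_cons_of_mem _ hb, hr⟩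
  | cons_right _ ih =>
    intro a ha
    obtain ⟨b, hb, hr⟩ := ih a ha
    exact ⟨b, List.mem_cons_of_mem _ hb, hr⟩

lemma sf_trans_aux {R : T → T → Prop} :
    ∀ {l₂ l₃ : List T}, List.SublistForall₂ R l₂ l₃ →
      ∀ {l₁ : List T}, List.SublistForall₂ R l₁ l₂ →
      (∀ a ∈ l₁, ∀ b ∈ l₂, ∀ c ∈ l₃, R a b → R b c → R a c) →
      List.SublistForall₂ R l₁ l₃ := by
  intro l₂ l₃ h23
  induction h23 with
  | nil =>
    intro l₁ h12 _
    rw [sf_nil_right h12]; exact List.SublistForall₂.nil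
  | @cons b c l₂' l₃' hbc h23' ih =>
    intro l₁ h12 htr
    cases h12 with
    | nil => exact List.SublistForall₂.nil
    | @cons a _ l₁' _ hab h12' =>
      exact List.SublistForall₂.cons
        (htr a (List.mem_cons_self) b (List.mem_cons_self) c
          (List.mem_cons_self) hab hbc)
        (ih h12' (fun a' ha' b' hb' c' hc' => htr a' (List.mem_cons_of_mem _ ha') b'
          (List.mem_cons_of_mem _ hb') c' (List.mem_cons_of_mem _ hc')))
    | cons_right h12' =>
      exact List.SublistForall₂.cons_right
        (ih h12' (fun a' ha' b' hb' c' hc' => htr a' ha' b' (List.mem_cons_of_mem _ hb') c'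
          (List.mem_cons_of_mem _ hc')))
  | @cons_right c l₂' l₃' h23' ih =>
    intro l₁ h12 htr
    exact List.SublistForall₂.cons_right
      (ih h12 (fun a' ha' b' hb' c' hc' => htr a' ha' b' hb' c' (List.mem_cons_of_mem _ hc')))

lemma sf_refl_of {l : List T} (h : ∀ x ∈ l, r x x) : List.SublistForall₂ r l l := by
  induction l with
  | nil => exact List.SublistForall₂.nil
  | cons a l ih =>
    exact List.SublistForall₂.cons (h a (List.mem_cons_self))
      (ih (fun x hx => h x (List.mem_cons_of_mem _ hx)))

lemma r_refl (t : T) : r t t := by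
  have H : ∀ n (t : T), tsize t ≤ n → r t t := by
    intro n
    induction n with
    | zero => intro t h; have := tsize_pos t; omega
    | succ n ih =>
      intro t h
      obtain ⟨q, ts⟩ := t
      refine TreeEmb.node trivial (sf_refl_of ?_)
      intro x hx
      exact ih x (by have := tsize_lt (q := q) hx; omega)
  exact H (tsize t) t le_rfl

lemma r_trans {a b c : T} (hab : r a b) (hbc : r b c) : r a c := by
  have H : ∀ n (c : T), tsize c ≤ n → ∀ a b : T, r a b → r b c → r a c := by
    intro n
    induction n with
    | zero => intro c h; have := tsize_pos c; omega
    | succ n ih =>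
      intro c hc a b hab hbc
      cases hbc with
      | @subtree _ q ss s hmem h' =>
        have hs : tsize s ≤ n := by have := tsize_lt (q := q) hmem; omega
        exact TreeEmb.subtree hmem (ih s hs a b hab h')
      | @node p q ts ss _ hL =>
        cases hab with
        | @subtree _ _ _ t hmem h' =>
          obtain ⟨s, hs, hts⟩ := sf_mem hL t hmem
          have hsn : tsize s ≤ n := by have := tsize_lt (q := q) hs; omega
          exact TreeEmb.subtree hs (ih s hsn a t h' hts)
        | node _ hL' =>
          refine TreeEmb.node trivial (sf_trans_aux hL hL' ?_)
          intro a' _ b' _ c' hc' h1 h2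
          have : tsize c' ≤ n := by have := tsize_lt (q := q) hc'; omega
          exact ih c' this a' b' h1 h2
  exact H (tsize c) c le_rfl a b hab hbc

instance : IsRefl T r := ⟨r_refl⟩
instance : IsTrans T r := ⟨fun _ _ _ => r_trans⟩
instance : IsPreorder T r := { refl := r_refl, trans := fun _ _ _ => r_trans }

def Bad (g : ℕ → T) : Prop := ∀ i j, i < j → ¬ r (g i) (g j)

def ExtL (v : List T) : Set T :=
  {t | ∃ g : ℕ → T, Bad g ∧ (∀ k (h : k < v.length), g k = v.get ⟨k, h⟩) ∧ g v.length = t}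

lemma exists_min_size {s : Set T} (hs : s.Nonempty) :
    ∃ t, t ∈ s ∧ ∀ u ∈ s, tsize t ≤ tsize u := by
  obtain ⟨t0, ht0⟩ := hs
  obtain ⟨m, ⟨t, ht, htm⟩, hmin⟩ := Nat.lt_wfRel.wf.has_min (tsize '' s) ⟨tsize t0, t0, ht0, rfl⟩
  refine ⟨t, ht, fun u hu => ?_⟩
  have := hmin (tsize u) ⟨u, hu, rfl⟩
  change ¬ tsize u < m at this
  omega

open Classical in
noncomputable def pick (s : Set T) : T :=
  if h : s.Nonempty then (exists_min_size h).choose else RoseTree.node () []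

lemma pick_spec {s : Set T} (h : s.Nonempty) :
    pick s ∈ s ∧ ∀ u ∈ s, tsize (pick s) ≤ tsize u := by
  rw [pick]
  rw [dif_pos h]
  exact (exists_min_size h).choose_spec

noncomputable def pre : ℕ → List T
  | 0 => []
  | n + 1 => pre n ++ [pick (ExtL (pre n))]

noncomputable def mbs (n : ℕ) : T := pick (ExtL (pre n))

lemma pre_length (n : ℕ) : (pre n).length = n := by
  induction n with
  | zero => rfl
  | succ n ih => simp [pre, ih]

lemma pre_get : ∀ n k (h : k < (pre n).length), (pre n).get ⟨k, h⟩ = mbs k := by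
  intro n
  induction n with
  | zero => intro k h; simp [pre] at h
  | succ n ih =>
    intro k h
    have hk : k < n + 1 := by rw [pre_length] at h; exact h
    show (pre n ++ [mbs n]).get ⟨k, _⟩ = mbs k
    rcases Nat.lt_or_ge k n with hlt | hge
    · rw [List.get_eq_getElem, List.getElem_append_left (by rw [pre_length]; exact hlt)]
      exact ih k _
    · have hkn : k = n := by omega
      subst hkn
      rw [List.get_eq_getElem]
      exact List.getElem_concat_length (pre_length k).symm _

lemma extL_nonempty {g0 : ℕ → T} (hg0 : Bad g0) : ∀ n, (ExtL (pre n)).Nonempty := by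
  intro n
  induction n with
  | zero =>
    exact ⟨g0 0, g0, hg0, fun k h => by rw [pre_length] at h; omega, by rw [pre_length]⟩
  | succ n ih =>
    have hmem : mbs n ∈ ExtL (pre n) := (pick_spec ih).1
    obtain ⟨g, hbad, hpref, hlast⟩ := hmem
    refine ⟨g (n + 1), g, hbad, ?_, by rw [pre_length]⟩
    intro k h
    rw [pre_get]
    have hk : k < n + 1 := by rw [pre_length] at h; exact h
    rcases Nat.lt_or_ge k n with hlt | hge
    · have := hpref k (by rw [pre_length]; exact hlt)
      rw [this, pre_get]
    · have hkn : k = n := by omega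
      subst hkn
      rw [pre_length] at hlast
      exact hlast

lemma mbs_mem {g0 : ℕ → T} (hg0 : Bad g0) (n : ℕ) : mbs n ∈ ExtL (pre n) :=
  (pick_spec (extL_nonempty hg0 n)).1

lemma mbs_min {g0 : ℕ → T} (hg0 : Bad g0) {n : ℕ} {t : T} (h : t ∈ ExtL (pre n)) :
    tsize (mbs n) ≤ tsize t :=
  (pick_spec (extL_nonempty hg0 n)).2 t h

lemma mbs_bad {g0 : ℕ → T} (hg0 : Bad g0) : Bad mbs := by
  intro i j hij hr
  obtain ⟨g, hbad, hpref, hlast⟩ := mbs_mem hg0 j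
  rw [pre_length] at hlast
  have hgi : g i = mbs i := by
    have := hpref i (by rw [pre_length]; exact hij)
    rw [this, pre_get]
  exact hbad i j hij (by rw [hgi, hlast]; exact hr)

def Sset : Set T := {t | ∃ n ts, mbs n = RoseTree.node () ts ∧ t ∈ ts}

lemma Sset_pwo {g0 : ℕ → T} (hg0 : Bad g0) : Sset.PartiallyWellOrderedOn r := by
  rw [Set.partiallyWellOrderedOn_iff_exists_lt]
  intro g hgS
  by_contra hcon
  push_neg at hcon
  have hgbad : Bad g := fun i j hij => hcon i j hij
  choose nf tsf hnode hmemf using hgS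
  obtain ⟨k0, hk0⟩ : ∃ k0, ∀ k, nf k0 ≤ nf k := by
    obtain ⟨m, hm, hmin⟩ := Nat.lt_wfRel.wf.has_min (Set.range nf) ⟨nf 0, 0, rfl⟩
    obtain ⟨k0, rfl⟩ := hm
    exact ⟨k0, fun k => not_lt.1 (fun h => hmin (nf k) ⟨k, rfl⟩ h)⟩
  set N := nf k0 with hN
  set h : ℕ → T := fun i => if i < N then mbs i else g (k0 + (i - N)) with hh
  have hbadh : Bad h := by
    intro i j hij hr
    by_cases hi : i < N
    · by_cases hj : j < N
      · simp only [hh, if_pos hi, if_pos hj] at hr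
        exact mbs_bad hg0 i j hij hr
      · simp only [hh, if_pos hi, if_neg hj] at hr
        set kj := k0 + (j - N) with hkj
        have h2 : r (mbs i) (mbs (nf kj)) := by
          rw [hnode kj]
          exact TreeEmb.subtree (hmemf kj) hr
        exact mbs_bad hg0 i (nf kj) (lt_of_lt_of_le hi (hk0 kj)) h2
    · have hj : ¬ j < N := by omega
      simp only [hh, if_neg hi, if_neg hj] at hr
      exact hgbad (k0 + (i - N)) (k0 + (j - N)) (by omega) hr
  have hmemN : h N ∈ ExtL (pre N) := by
    refine ⟨h, hbadh, ?_, by rw [pre_length]⟩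
    intro k hk
    rw [pre_get]
    have : k < N := by rw [pre_length] at hk; exact hk
    simp only [hh, if_pos this]
  have h1 : tsize (mbs N) ≤ tsize (h N) := mbs_min hg0 hmemN
  have h2 : h N = g k0 := by simp [hh]
  have h3 : tsize (g k0) < tsize (mbs N) := by
    rw [hN, hnode k0]
    exact tsize_lt (hmemf k0)
  rw [h2] at h1
  omega

lemma no_bad {g0 : ℕ → T} (hg0 : Bad g0) : False := by
  have hp := Set.PartiallyWellOrderedOn.partiallyWellOrderedOn_sublistForall₂ r (Sset_pwo hg0)
  have hch : ∀ n, ∃ ts, mbs n = RoseTree.node () ts := by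
    intro n
    cases hm : mbs n with
    | node q ts => exact ⟨ts, by cases q; rfl⟩
  choose ch hchs using hch
  obtain ⟨i, j, hij, hsf⟩ := (Set.partiallyWellOrderedOn_iff_exists_lt.1 hp) ch (fun n => fun x hx => ⟨n, ch n, hchs n, hx⟩)
  exact mbs_bad hg0 i j hij (by rw [hchs i, hchs j]; exact TreeEmb.node trivial hsf)

end KruskalAux

/-- Kruskal's theorem for unlabelled trees, KT(ω): unlabelled finite rooted
ordered trees (trees labelled by a one-element quasi-order) under
embeddability form a well quasi-order. -/
theorem kruskal_unlabelled :
    ∀ f : ℕ → RoseTree Unit,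
      ∃ i j : ℕ, i < j ∧ TreeEmb (fun _ _ => True) (f i) (f j) := by
  intro f
  by_contra hcon
  push_neg at hcon
  exact (KruskalAux.no_bad (fun i j hij => hcon i j hij)).elim
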